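/- arXiv:1611.03058 — 2 statements merged into one kernel-verified Lean document; each statement's English description precedes it below -/
import Mathlib

section
/- Let D and T be pretriangulated categories and let F : D ⥤ T be a fully faithful exact functor (commuting with the shifts and sending distinguished triangles to distinguished triangles) which admits a right adjoint G. Let A be a strictly full triangulated subcategory of T (closed under shifts, extensions, and isomorphisms) which is admissible, i.e. the inclusion A ↪ T admits both a left and a right adjoint. Suppose Ω is a spanning class of D such that F(ω) ∈ A for every ω ∈ Ω. Then F(x) ∈ A for every object x of D. -/
open CategoryTheory Category Limits Pretriangulated

/-- A class of objects `Ω` in a pretriangulated category `D` is a spanning class if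
orthogonality (on either side) to all shifts of objects of `Ω` forces an object to be zero. -/
def IsSpanningClass {D : Type*} [Category D] [HasZeroObject D] [Preadditive D]
    [HasShift D ℤ] [∀ n : ℤ, (CategoryTheory.shiftFunctor D n).Additive] [Pretriangulated D]
    (Ω : Set D) : Prop :=
  (∀ t : D, (∀ ω ∈ Ω, ∀ i : ℤ, ∀ f : t ⟶ ω⟦i⟧, f = 0) → IsZero t) ∧
  (∀ t : D, (∀ ω ∈ Ω, ∀ i : ℤ, ∀ f : ω⟦i⟧ ⟶ t, f = 0) → IsZero t)

/-- If `F : D ⥤ T` is a fully faithful exact functor with a right adjoint, `A` is an admissible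
strictly full triangulated subcategory of `T`, and `Ω` is a spanning class of `D` with
`F(Ω) ⊆ A`, then the image of `F` is contained in `A`. -/
theorem image_subset_of_spanning_class_subset
    {D T : Type*} [Category D] [Category T]
    [HasZeroObject D] [Preadditive D] [HasShift D ℤ]
    [∀ n : ℤ, (CategoryTheory.shiftFunctor D n).Additive] [Pretriangulated D]
    [HasZeroObject T] [Preadditive T] [HasShift T ℤ]
    [∀ n : ℤ, (CategoryTheory.shiftFunctor T n).Additive] [Pretriangulated T]
    (F : D ⥤ T) [F.Full] [F.Faithful] [F.CommShift ℤ] [F.IsTriangulated]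
    (G : T ⥤ D) (adj : F ⊣ G)
    (A : ObjectProperty T) [A.IsTriangulated] [A.IsClosedUnderIsomorphisms]
    [A.ι.IsRightAdjoint]
    [A.ι.IsLeftAdjoint]
    (Ω : Set D) (hΩ : IsSpanningClass Ω) (hΩA : ∀ ω ∈ Ω, A (F.obj ω)) :
    ∀ x : D, A (F.obj x) := by
  intro x
  set i := A.ι with hi
  have adjA : i ⊣ i.rightAdjoint := Adjunction.ofIsLeftAdjoint i
  set t := F.obj x with ht
  set a₀ : A.FullSubcategory := i.rightAdjoint.obj t with ha₀
  set ε : i.obj a₀ ⟶ t := adjA.counit.app t with hε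
  -- composition with ε is bijective on Hom(i.obj b, i.obj a₀) for b in A
  have surj : ∀ (b : A.FullSubcategory) (ψ : i.obj b ⟶ t),
      ∃ φ : i.obj b ⟶ i.obj a₀, φ ≫ ε = ψ :=
    fun b ψ => ⟨i.map (adjA.homEquiv b t ψ), by
      rw [hε, ← adjA.homEquiv_counit, Equiv.symm_apply_apply]⟩
  have inj : ∀ (b : A.FullSubcategory) (φ₁ φ₂ : i.obj b ⟶ i.obj a₀),
      φ₁ ≫ ε = φ₂ ≫ ε → φ₁ = φ₂ := by
    intro b φ₁ φ₂ h
    rw [← i.map_preimage φ₁, ← i.map_preimage φ₂] at h ⊢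
    congr 1
    apply (adjA.homEquiv b t).symm.injective
    rw [adjA.homEquiv_counit, adjA.homEquiv_counit]
    exact h
  -- the distinguished triangle i a₀ → t → c
  obtain ⟨c, π, δ, hTri⟩ := Pretriangulated.distinguished_cocone_triangle ε
  -- key claim: any map from an object of A to c vanishes
  have key : ∀ (a : T), A a → ∀ f : a ⟶ c, f = 0 := by
    intro a ha f
    -- first: f ≫ δ = 0
    have hδε : δ ≫ ε⟦(1 : ℤ)⟧' = 0 := comp_distTriang_mor_zero₃₁ _ hTri
    have hfδ : f ≫ δ = 0 := by
      set h : a ⟶ (i.obj a₀)⟦(1 : ℤ)⟧ := f ≫ δ with hh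
      have h0 : h ≫ ε⟦(1 : ℤ)⟧' = 0 := by rw [hh, assoc, hδε, comp_zero]
      -- shift back by -1
      set e := shiftFunctorCompIsoId T (1 : ℤ) (-1 : ℤ) (by omega) with he
      set k : a⟦(-1 : ℤ)⟧ ⟶ i.obj a₀ := h⟦(-1 : ℤ)⟧' ≫ e.hom.app (i.obj a₀) with hk
      have hknat : k ≫ ε = h⟦(-1 : ℤ)⟧' ≫ (ε⟦(1 : ℤ)⟧')⟦(-1 : ℤ)⟧' ≫ e.hom.app t := by
        rw [hk, assoc]
        congr 1
        exact (e.hom.naturality ε).symm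
      have hk0 : k ≫ ε = 0 := by
        rw [hknat, ← assoc, ← Functor.map_comp, h0, Functor.map_zero, zero_comp]
      have : k = 0 := by
        have := inj ⟨a⟦(-1 : ℤ)⟧, A.le_shift (-1) a ha⟩ k 0 (by rw [hk0, zero_comp])
        exact this
      have hsh : h⟦(-1 : ℤ)⟧' = 0 := by
        have := this
        rw [hk] at this
        simpa using (by
          have : h⟦(-1 : ℤ)⟧' ≫ e.hom.app (i.obj a₀) = 0 ≫ e.hom.app (i.obj a₀) := by
            rw [zero_comp]; exact this
          exact (cancel_mono (e.hom.app (i.obj a₀))).mp this)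
      have : h = 0 := by
        apply (shiftFunctor T (-1 : ℤ)).map_injective
        rw [hsh, Functor.map_zero]
      exact this
    obtain ⟨g, hg⟩ := Pretriangulated.Triangle.coyoneda_exact₃ _ hTri f hfδ
    obtain ⟨v, hv⟩ := surj ⟨a, ha⟩ g
    have hεπ : ε ≫ π = 0 := comp_distTriang_mor_zero₁₂ _ hTri
    rw [hg, ← hv]
    exact (assoc v ε π).trans (by rw [hεπ, comp_zero])
  -- Hom(ω⟦k⟧, G c) = 0, so G c = 0
  have hGc : IsZero (G.obj c) := by
    apply hΩ.2
    intro ω hω k f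
    have hA : A (F.obj (ω⟦k⟧)) :=
      A.prop_of_iso ((F.commShiftIso k).app ω).symm (A.le_shift k _ (hΩA ω hω))
    have : Subsingleton (F.obj (ω⟦k⟧) ⟶ c) :=
      ⟨fun u v => by rw [key _ hA u, key _ hA v]⟩
    have : Subsingleton (ω⟦k⟧ ⟶ G.obj c) := (adj.homEquiv _ _).symm.subsingleton
    exact Subsingleton.elim f 0
  -- π = 0
  have hπ : π = 0 := by
    apply (adj.homEquiv x c).injective
    exact hGc.eq_of_tgt _ _
  -- c is zero
  have hc : IsZero c := by
    rw [IsZero.iff_id_eq_zero]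
    obtain ⟨g, hg⟩ := Pretriangulated.Triangle.yoneda_exact₃ _ hTri (𝟙 c)
      (by dsimp only [Triangle.mk]; rw [hπ, zero_comp]; rfl)
    rw [hg, key _ (A.le_shift 1 _ a₀.property) g]; exact comp_zero
  -- ε is an isomorphism, so t ≅ i.obj a₀ is in A
  have : IsIso ε := (Pretriangulated.Triangle.isZero₃_iff_isIso₁ _ hTri).mp hc
  exact A.prop_of_iso (asIso ε) a₀.property
end

section
/- Let m, n, d be integers with 2 ≤ m ≤ n ≤ d, let ζ ∈ k be a primitive d-th root of unity, and let i, j be natural numbers with j ≤ i ≤ m − 2. If P ∈ k[x, y] is homogeneous of total degree m − i − 2 and satisfies σ_ζ(P) = ζ^{n−j−1} · P, then P = 0. -/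
open MvPolynomial

/-- The `k`-algebra endomorphism of `k[x, y]` fixing `x` and scaling `y` by `ζ`. -/
noncomputable def sigmaZeta (k : Type*) [Field k] (ζ : k) :
    MvPolynomial (Fin 2) k →ₐ[k] MvPolynomial (Fin 2) k :=
  aeval ![X 0, ζ • X 1]

lemma sigmaZeta_monomial (k : Type*) [Field k] (ζ : k) (s : Fin 2 →₀ ℕ) (c : k) :
    sigmaZeta k ζ (monomial s c) = ζ ^ (s 1) • monomial s c := by
  rw [sigmaZeta, aeval_monomial, monomial_eq,
    Finsupp.prod_fintype _ _ (by simp), Finsupp.prod_fintype _ _ (by simp)]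
  simp only [Fin.prod_univ_two, Matrix.cons_val_zero, Matrix.cons_val_one, Matrix.head_cons,
    smul_pow, algebraMap_eq, smul_eq_C_mul, map_pow]
  ring

lemma coeff_sigmaZeta (k : Type*) [Field k] (ζ : k) (P : MvPolynomial (Fin 2) k)
    (s : Fin 2 →₀ ℕ) :
    coeff s (sigmaZeta k ζ P) = ζ ^ (s 1) * coeff s P := by
  induction P using MvPolynomial.induction_on' with
  | monomial u a =>
    rw [sigmaZeta_monomial]
    simp only [coeff_smul, coeff_monomial, smul_eq_mul]
    split_ifs with h
    · subst h; ring
    · ring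
  | add p q hp hq =>
    simp [map_add, coeff_add, hp, hq]; ring

/-- For `2 ≤ m ≤ n ≤ d` and `j ≤ i ≤ m - 2`: a homogeneous polynomial `P ∈ k[x,y]` of
degree `m - i - 2` with `σ_ζ(P) = ζ^{n-j-1} · P` is zero.  This is the vanishing
`H^0(l(p,q), O(m-i-2) ⊗ χ^{n-j-1})^{μ_d} = 0` used for the semi-orthogonality
`⟨D_{fg}, A₃⟩`. -/
theorem semiorthogonality_Dfg_A3_vanishing (k : Type*) [Field k] (m n d : ℕ)
    (hm : 2 ≤ m) (hmn : m ≤ n) (hnd : n ≤ d)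
    (ζ : k) (hζ : IsPrimitiveRoot ζ d)
    (i j : ℕ) (hji : j ≤ i) (him : i ≤ m - 2)
    (P : MvPolynomial (Fin 2) k)
    (hhom : P.IsHomogeneous (m - i - 2))
    (heig : sigmaZeta k ζ P = ζ ^ (n - j - 1) • P) :
    P = 0 := by
  by_contra hP
  obtain ⟨s, hs⟩ : ∃ s, coeff s P ≠ 0 := by
    by_contra h
    push_neg at h
    exact hP (MvPolynomial.ext _ _ fun s => by simp [h s])
  have hdeg : s.degree = m - i - 2 := by
    rw [Finsupp.degree_eq_weight_one]; exact hhom hs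
  have hs1 : s 1 ≤ m - i - 2 := by
    have : s 1 ≤ s.degree := Finsupp.le_degree 1 s
    omega
  have hcoeff := congrArg (coeff s) heig
  rw [coeff_sigmaZeta, coeff_smul, smul_eq_mul] at hcoeff
  have heq : ζ ^ (s 1) = ζ ^ (n - j - 1) := by
    exact mul_right_cancel₀ hs hcoeff
  have := hζ.pow_inj (by omega) (by omega) heq
  omega
end
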